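/- Let U ⊆ ℝ^d be open, let ζ : ℝ^d → ℝ^q be twice continuously differentiable with the Gram matrix G(x) = g(x)^T g(x) invertible for all x ∈ U, and set Π(x) = I_d − g(x) G(x)^{-1} g(x)^T. Let φ : ℝ^d → ℝ^p be twice continuously differentiable with φ'(x) g(x) = 0 for all x ∈ U. Then for every x ∈ U, (1/2) φ'(x)(∇(ln det G)(x)) + Δφ(x) = Σ_{i=1}^d φ'(x)(Π'(x)(Π(x) e_i) e_i) + Σ_{i=1}^d φ''(x)(Π(x) e_i, Π(x) e_i), where Δφ(x) = Σ_{i=1}^d φ''(x)(e_i, e_i). -/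

import Mathlib

open Matrix

section Aux

noncomputable def detCM (n : ℕ) : ContinuousMultilinearMap ℝ (fun _ : Fin n => (Fin n → ℝ)) ℝ :=
  MultilinearMap.mkContinuous
    (Matrix.detRowAlternating : (Fin n → ℝ) [⋀^Fin n]→ₗ[ℝ] ℝ).toMultilinearMap
    (Fintype.card (Equiv.Perm (Fin n))) (by
      intro m
      have h0 : (Matrix.detRowAlternating (R := ℝ) (n := Fin n)).toMultilinearMap m
          = (Matrix.of m).det := rfl
      rw [h0, Matrix.det_apply]
      calc ‖∑ σ : Equiv.Perm (Fin n), Equiv.Perm.sign σ • ∏ i, Matrix.of m (σ i) i‖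
          ≤ ∑ σ : Equiv.Perm (Fin n), ‖Equiv.Perm.sign σ • ∏ i, Matrix.of m (σ i) i‖ :=
            norm_sum_le _ _
        _ ≤ ∑ σ : Equiv.Perm (Fin n), ∏ i, ‖m i‖ := by
            apply Finset.sum_le_sum
            intro σ _
            have h1 : ‖Equiv.Perm.sign σ • ∏ i, Matrix.of m (σ i) i‖
                = ‖∏ i, Matrix.of m (σ i) i‖ := by
              rcases Int.units_eq_one_or (Equiv.Perm.sign σ) with h | h <;>
                simp [h, norm_neg]
            rw [h1]
            have h2 : ‖∏ i, Matrix.of m (σ i) i‖ ≤ ∏ i, ‖m (σ i)‖ := by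
              rw [Real.norm_eq_abs, Finset.abs_prod]
              apply Finset.prod_le_prod (fun i _ => abs_nonneg _)
              intro i _
              exact norm_le_pi_norm (m (σ i)) i
            refine h2.trans (le_of_eq ?_)
            exact Equiv.prod_comp σ fun i => ‖m i‖
        _ = (Fintype.card (Equiv.Perm (Fin n))) * ∏ i, ‖m i‖ := by
            rw [Finset.sum_const, Finset.card_univ, nsmul_eq_mul])

lemma detCM_apply {n : ℕ} (m : Fin n → (Fin n → ℝ)) : detCM n m = (Matrix.of m).det := rfl

lemma sum_det_updateRow {n : ℕ} (A H : Matrix (Fin n) (Fin n) ℝ) :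
    ∑ i, (A.updateRow i (H i)).det = (A.adjugate * H).trace := by
  have key : ∀ i, (A.updateRow i (H i)).det = ∑ j, H i j * A.adjugate j i := by
    intro i
    have h1 : (A.updateRow i (H i)).det = Matrix.cramer Aᵀ (H i) i := by
      rw [Matrix.cramer_apply, Matrix.updateCol_transpose, Matrix.det_transpose]
    rw [h1]
    have h2 : (H i : Fin n → ℝ) = ∑ j, H i j • (Pi.single j 1 : Fin n → ℝ) := by
      ext k; simp [Pi.single_apply, eq_comm]
    calc Aᵀ.cramer (H i) i
        = Aᵀ.cramer (∑ j, H i j • (Pi.single j 1 : Fin n → ℝ)) i := by rw [← h2]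
      _ = ∑ j, H i j * A.adjugate j i := by
          rw [map_sum, Finset.sum_apply]
          refine Finset.sum_congr rfl fun j _ => ?_
          rw [LinearMap.map_smul, Pi.smul_apply, Matrix.adjugate_def]
          simp only [smul_eq_mul, Matrix.of_apply]
  simp only [key, Matrix.trace, Matrix.diag, Matrix.mul_apply]
  rw [Finset.sum_comm]
  congr 1; ext i; congr 1; ext j; ring

variable {E : Type*} [NormedAddCommGroup E] [NormedSpace ℝ E]

lemma det_hasFDerivAt {n : ℕ} {N : E → Matrix (Fin n) (Fin n) ℝ} {x : E}
    {N' : Fin n → Fin n → E →L[ℝ] ℝ}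
    (h : ∀ i j, HasFDerivAt (fun y => N y i j) (N' i j) x) :
    ∃ L : E →L[ℝ] ℝ, HasFDerivAt (fun y => (N y).det) L x ∧
      ∀ v, L v = ((N x).adjugate * Matrix.of (fun i j => N' i j v)).trace := by
  have hrow : ∀ i, HasFDerivAt (fun y => (N y i : Fin n → ℝ))
      (ContinuousLinearMap.pi fun j => N' i j) x := by
    intro i
    apply hasFDerivAt_pi''
    intro j
    rw [ContinuousLinearMap.proj_pi]
    exact h i j
  have Hc := HasFDerivAt.multilinear_comp (detCM n)
    (g := fun i y => N y i) (g' := fun i => ContinuousLinearMap.pi fun j => N' i j)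
    (x := x) hrow
  refine ⟨∑ i, ((detCM n).toContinuousLinearMap (fun j => N x j) i).comp
    (ContinuousLinearMap.pi fun j => N' i j), ?_, ?_⟩
  · have heq : (fun y => (N y).det) = fun y => detCM n fun i => N y i := by
      funext y; rw [detCM_apply]; rfl
    rw [heq]; exact Hc
  · intro v
    rw [ContinuousLinearMap.sum_apply]
    have key : ∀ i, (((detCM n).toContinuousLinearMap (fun j => N x j) i).comp
        (ContinuousLinearMap.pi fun j => N' i j)) v
        = ((N x).updateRow i (fun j => N' i j v)).det := by
      intro i
      rw [ContinuousLinearMap.comp_apply]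
      rw [ContinuousMultilinearMap.toContinuousLinearMap_apply]
      rw [detCM_apply]
      congr 1
    rw [Finset.sum_congr rfl (fun i _ => key i)]
    exact sum_det_updateRow (N x) (Matrix.of fun i j => N' i j v)

lemma sumalg {dd qq : ℕ} (inv : Matrix (Fin qq) (Fin qq) ℝ) (gx : Matrix (Fin dd) (Fin qq) ℝ)
    (fd : Fin dd → Fin qq → ℝ)
    (hsym : ∀ a b, inv a b = inv b a) :
    ∑ c, ∑ b, inv c b * (∑ i, (gx i b * fd i c + gx i c * fd i b))
      = 2 * ∑ i, ∑ c, fd i c * (∑ b, inv c b * gx i b) := by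
  have hdist : ∀ c b, inv c b * (∑ i, (gx i b * fd i c + gx i c * fd i b))
      = (∑ i, inv c b * gx i b * fd i c) + ∑ i, inv c b * gx i c * fd i b := by
    intro c b
    rw [Finset.mul_sum, ← Finset.sum_add_distrib]
    refine Finset.sum_congr rfl fun i _ => ?_
    ring
  simp only [hdist]
  simp only [Finset.sum_add_distrib]
  have hS2 : ∑ c, ∑ b, ∑ i, inv c b * gx i c * fd i b
      = ∑ c, ∑ b, ∑ i, inv c b * gx i b * fd i c := by
    rw [Finset.sum_comm]
    refine Finset.sum_congr rfl fun c _ => Finset.sum_congr rfl fun b _ =>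
      Finset.sum_congr rfl fun i _ => ?_
    rw [hsym]
  rw [hS2]
  have hR : ∑ i, ∑ c, fd i c * (∑ b, inv c b * gx i b)
      = ∑ c, ∑ b, ∑ i, inv c b * gx i b * fd i c := by
    calc ∑ i, ∑ c, fd i c * (∑ b, inv c b * gx i b)
        = ∑ i, ∑ c, ∑ b, inv c b * gx i b * fd i c := by
          refine Finset.sum_congr rfl fun i _ => Finset.sum_congr rfl fun c _ => ?_
          rw [Finset.mul_sum]
          refine Finset.sum_congr rfl fun b _ => ?_
          ring
      _ = ∑ c, ∑ i, ∑ b, inv c b * gx i b * fd i c := Finset.sum_comm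
      _ = ∑ c, ∑ b, ∑ i, inv c b * gx i b * fd i c :=
          Finset.sum_congr rfl fun c _ => Finset.sum_comm
  rw [hR]
  ring

end Aux

set_option maxHeartbeats 2000000 in
theorem laplacian_projection_identity (d p q : ℕ)
    (U : Set (EuclideanSpace ℝ (Fin d))) (hU : IsOpen U)
    (ζ : EuclideanSpace ℝ (Fin d) → EuclideanSpace ℝ (Fin q)) (hζ : ContDiff ℝ 2 ζ)
    (g : EuclideanSpace ℝ (Fin d) → Matrix (Fin d) (Fin q) ℝ)
    (hg : ∀ y i j, g y i j = fderiv ℝ ζ y (EuclideanSpace.single i 1) j)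
    (hGinv : ∀ y ∈ U, IsUnit ((g y)ᵀ * g y))
    (Pr : EuclideanSpace ℝ (Fin d) → Matrix (Fin d) (Fin d) ℝ)
    (hPr : ∀ y, Pr y = 1 - g y * ((g y)ᵀ * g y)⁻¹ * (g y)ᵀ)
    (φ : EuclideanSpace ℝ (Fin d) → EuclideanSpace ℝ (Fin p)) (hφ : ContDiff ℝ 2 φ)
    (htan : ∀ y ∈ U, ∀ M : EuclideanSpace ℝ (Fin q),
      fderiv ℝ φ y (Matrix.toEuclideanLin (g y) M) = 0) :
    ∀ x ∈ U,
      (1 / 2 : ℝ) • fderiv ℝ φ x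
          (gradient (fun y => Real.log ((g y)ᵀ * g y).det) x)
        + ∑ i : Fin d,
            fderiv ℝ (fun y => fderiv ℝ φ y (EuclideanSpace.single i 1)) x
              (EuclideanSpace.single i 1)
      = (∑ i : Fin d,
          fderiv ℝ φ x ((WithLp.equiv 2 (Fin d → ℝ)).symm
            ((Matrix.of fun k l => fderiv ℝ (fun y => Pr y k l) x
                ((WithLp.equiv 2 (Fin d → ℝ)).symm
                  ((Pr x).mulVec (Pi.single i 1)))).mulVec (Pi.single i 1))))
        + ∑ i : Fin d,
            fderiv ℝ (fun y => fderiv ℝ φ y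
                ((WithLp.equiv 2 (Fin d → ℝ)).symm ((Pr x).mulVec (Pi.single i 1)))) x
              ((WithLp.equiv 2 (Fin d → ℝ)).symm ((Pr x).mulVec (Pi.single i 1))) := by
  intro x hx
  classical
  -- continuous linear embedding (Fin d → ℝ) → EuclideanSpace, composed with D
  set D : EuclideanSpace ℝ (Fin d) →L[ℝ] EuclideanSpace ℝ (Fin p) := fderiv ℝ φ x with hD
  set B2 : EuclideanSpace ℝ (Fin d) →L[ℝ]
      (EuclideanSpace ℝ (Fin d) →L[ℝ] EuclideanSpace ℝ (Fin p)) :=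
    fderiv ℝ (fderiv ℝ φ) x with hB2def
  set DL : (Fin d → ℝ) →L[ℝ] EuclideanSpace ℝ (Fin p) :=
    D.comp ((EuclideanSpace.equiv (Fin d) ℝ).symm :
      (Fin d → ℝ) ≃L[ℝ] EuclideanSpace ℝ (Fin d)).toContinuousLinearMap with hDLdef
  have hDL : ∀ v : Fin d → ℝ, D ((WithLp.equiv 2 (Fin d → ℝ)).symm v) = DL v := by
    intro v
    rw [hDLdef, ContinuousLinearMap.comp_apply]
    congr 1
  -- the derivative matrix of g at x in direction u
  set g1 : EuclideanSpace ℝ (Fin d) → Matrix (Fin d) (Fin q) ℝ :=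
    fun u => Matrix.of fun i j => fderiv ℝ (fun y => g y i j) x u with hg1def
  -- the matrix A = G⁻¹ gᵀ and the vectors a i
  set AA : Matrix (Fin q) (Fin d) ℝ := ((g x)ᵀ * g x)⁻¹ * (g x)ᵀ with hAA
  set av : Fin d → (Fin q → ℝ) := fun i => AA.mulVec (Pi.single i 1) with hav
  -- hoisted smoothness facts
  have hζ1 : ContDiff ℝ 1 (fderiv ℝ ζ) := hζ.fderiv_right (by norm_num)
  have hζd : DifferentiableAt ℝ (fderiv ℝ ζ) x :=
    (hζ1.differentiable one_ne_zero).differentiableAt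
  have hφ1d : DifferentiableAt ℝ (fderiv ℝ φ) x :=
    ((hφ.fderiv_right (m := 1) (by norm_num)).differentiable one_ne_zero).differentiableAt
  have hgC : ∀ i j, ContDiff ℝ 1 (fun y => g y i j) := by
    intro i j
    have h1 : ContDiff ℝ 1 (fun y => fderiv ℝ ζ y (EuclideanSpace.single i 1)) :=
      hζ1.clm_apply contDiff_const
    have heq : (fun y => g y i j) = (⇑(EuclideanSpace.proj (𝕜 := ℝ) j)
        ∘ fun y => fderiv ℝ ζ y (EuclideanSpace.single i 1)) := by
      funext y; rw [hg y i j]; rfl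
    rw [heq]; exact (EuclideanSpace.proj j).contDiff.comp h1
  have hgd : ∀ i j, DifferentiableAt ℝ (fun y => g y i j) x :=
    fun i j => ((hgC i j).differentiable one_ne_zero).differentiableAt
  -- symmetry of the second derivative of ζ
  have hsymm : ∀ (i k : Fin d) (j : Fin q),
      fderiv ℝ (fun y => g y i j) x (EuclideanSpace.single k 1)
        = fderiv ℝ (fun y => g y k j) x (EuclideanSpace.single i 1) := by
    intro i k j
    have key : ∀ (i k : Fin d), fderiv ℝ (fun y => g y i j) x (EuclideanSpace.single k 1)
        = (EuclideanSpace.proj j : EuclideanSpace ℝ (Fin q) →L[ℝ] ℝ)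
            (fderiv ℝ (fderiv ℝ ζ) x (EuclideanSpace.single k 1) (EuclideanSpace.single i 1)) := by
      intro i k
      have hf : DifferentiableAt ℝ (fun y => fderiv ℝ ζ y (EuclideanSpace.single i 1)) x :=
        ((hζ1.clm_apply contDiff_const).differentiable one_ne_zero).differentiableAt
      have heq : (fun y => g y i j) = (⇑(EuclideanSpace.proj (𝕜 := ℝ) j)
          ∘ fun y => fderiv ℝ ζ y (EuclideanSpace.single i 1)) := by
        funext y; rw [hg y i j]; rfl
      rw [heq]
      have hcomp : HasFDerivAt (⇑(EuclideanSpace.proj (𝕜 := ℝ) j)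
            ∘ fun y => fderiv ℝ ζ y (EuclideanSpace.single i 1))
          ((EuclideanSpace.proj j).comp
              (fderiv ℝ (fun y => fderiv ℝ ζ y (EuclideanSpace.single i 1)) x)) x :=
        (EuclideanSpace.proj j).hasFDerivAt.comp x hf.hasFDerivAt
      rw [hcomp.fderiv]
      have hclm : fderiv ℝ (fun y => fderiv ℝ ζ y (EuclideanSpace.single i 1)) x
            (EuclideanSpace.single k 1)
          = fderiv ℝ (fderiv ℝ ζ) x (EuclideanSpace.single k 1) (EuclideanSpace.single i 1) := by
        rw [fderiv_clm_apply hζd (differentiableAt_const _)]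
        simp
      rw [ContinuousLinearMap.comp_apply, hclm]
    rw [key i k, key k i]
    congr 1
    exact (hζ.contDiffAt.isSymmSndFDerivAt (by norm_num)).eq _ _
  -- derivative of the Gram matrix entries
  have hGder : ∀ a b, HasFDerivAt (fun y => ((g y)ᵀ * g y) a b)
      (∑ i, (g x i a • fderiv ℝ (fun y => g y i b) x
        + g x i b • fderiv ℝ (fun y => g y i a) x)) x := by
    intro a b
    have heq : (fun y => ((g y)ᵀ * g y) a b) = fun y => ∑ i, g y i a * g y i b := by
      funext y; simp [Matrix.mul_apply, Matrix.transpose_apply]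
    rw [heq]
    exact HasFDerivAt.fun_sum fun i _ =>
      ((hgd i a).hasFDerivAt.mul (hgd i b).hasFDerivAt)
  have hGd : ∀ a b, DifferentiableAt ℝ (fun y => ((g y)ᵀ * g y) a b) x :=
    fun a b => (hGder a b).differentiableAt
  -- determinant of the Gram matrix is nonzero at x
  have hdet_ne : ((g x)ᵀ * g x).det ≠ 0 := by
    have := (Matrix.isUnit_iff_isUnit_det _).1 (hGinv x hx)
    exact IsUnit.ne_zero this
  -- differentiability of det, adjugate, inverse entries
  have hdetd : DifferentiableAt ℝ (fun y => ((g y)ᵀ * g y).det) x := by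
    obtain ⟨L, hL, _⟩ := det_hasFDerivAt (N := fun y => (g y)ᵀ * g y)
      (N' := fun a b => ∑ i, (g x i a • fderiv ℝ (fun y => g y i b) x
        + g x i b • fderiv ℝ (fun y => g y i a) x)) hGder
    exact hL.differentiableAt
  have hadjd : ∀ a b, DifferentiableAt ℝ (fun y => ((g y)ᵀ * g y).adjugate a b) x := by
    intro a b
    have heq : (fun y => ((g y)ᵀ * g y).adjugate a b)
        = fun y => (((g y)ᵀ * g y).updateRow b (Pi.single a 1)).det := by
      funext y; rw [Matrix.adjugate_apply]
    rw [heq]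
    obtain ⟨L, hL, _⟩ := det_hasFDerivAt
      (N := fun y => ((g y)ᵀ * g y).updateRow b (Pi.single a 1))
      (N' := fun r s => if r = b then 0 else fderiv ℝ (fun y => ((g y)ᵀ * g y) r s) x)
      (by
        intro r s
        by_cases hrb : r = b
        · subst hrb
          have hconst : (fun y => (((g y)ᵀ * g y).updateRow r (Pi.single a 1)) r s)
              = fun _ => (Pi.single a 1 : Fin q → ℝ) s := by
            funext y; rw [Matrix.updateRow_self]
          rw [hconst]
          show HasFDerivAt _ (if r = r then (0 : EuclideanSpace ℝ (Fin d) →L[ℝ] ℝ)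
            else fderiv ℝ (fun y => ((g y)ᵀ * g y) r s) x) x
          rw [if_pos rfl]
          exact hasFDerivAt_const _ _
        · have hne : (fun y => (((g y)ᵀ * g y).updateRow b (Pi.single a 1)) r s)
              = fun y => ((g y)ᵀ * g y) r s := by
            funext y; rw [Matrix.updateRow_ne hrb]
          rw [hne]
          show HasFDerivAt _ (if r = b then (0 : EuclideanSpace ℝ (Fin d) →L[ℝ] ℝ)
            else fderiv ℝ (fun y => ((g y)ᵀ * g y) r s) x) x
          rw [if_neg hrb]
          exact (hGd r s).hasFDerivAt )
    exact hL.differentiableAt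
  have hinvd : ∀ a b, DifferentiableAt ℝ (fun y => ((g y)ᵀ * g y)⁻¹ a b) x := by
    intro a b
    have heq : (fun y => ((g y)ᵀ * g y)⁻¹ a b)
        = fun y => (((g y)ᵀ * g y).det)⁻¹ * ((g y)ᵀ * g y).adjugate a b := by
      funext y
      rw [Matrix.inv_def, Ring.inverse_eq_inv, Matrix.smul_apply, smul_eq_mul]
    rw [heq]
    exact (hdetd.inv hdet_ne).mul (hadjd a b)
  have hBinvd : ∀ r s, DifferentiableAt ℝ
      (fun y => (((g y)ᵀ * g y)⁻¹ * (g y)ᵀ) r s) x := by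
    intro r s
    have heq : (fun y => (((g y)ᵀ * g y)⁻¹ * (g y)ᵀ) r s)
        = fun y => ∑ c, ((g y)ᵀ * g y)⁻¹ r c * g y s c := by
      funext y; simp [Matrix.mul_apply, Matrix.transpose_apply]
    rw [heq]
    exact DifferentiableAt.fun_sum fun c _ => (hinvd r c).mul (hgd s c)
  -- decomposition of the projected basis vectors
  have hws : ∀ i, (Pr x).mulVec (Pi.single i 1)
      = Pi.single i 1 - (g x).mulVec (av i) := by
    intro i
    rw [hPr x, Matrix.sub_mulVec, Matrix.one_mulVec, hav, hAA, Matrix.mul_assoc,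
      ← Matrix.mulVec_mulVec]
  have hηw : ∀ i, (WithLp.equiv 2 (Fin d → ℝ)).symm ((Pr x).mulVec (Pi.single i 1))
      = EuclideanSpace.single i 1
        - (WithLp.equiv 2 (Fin d → ℝ)).symm ((g x).mulVec (av i)) := by
    intro i
    rw [hws]; rfl
  -- F1 : D kills the range of g x
  have hker : ∀ v : Fin q → ℝ, DL ((g x).mulVec v) = 0 := by
    intro v
    have h := htan x hx ((WithLp.equiv 2 (Fin q → ℝ)).symm v)
    rw [Matrix.toEuclideanLin_apply, WithLp.equiv_symm_apply, WithLp.ofLp_toLp] at h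
    rw [← hDL]
    exact h
  -- second derivative as bilinear map
  have hBapp : ∀ w u : EuclideanSpace ℝ (Fin d),
      fderiv ℝ (fun y => fderiv ℝ φ y w) x u = B2 u w := by
    intro w u
    rw [fderiv_clm_apply hφ1d (differentiableAt_const w)]
    simp [hB2def]
  have hB2symm : ∀ u w, B2 u w = B2 w u := by
    intro u w
    rw [hB2def]
    exact (hφ.contDiffAt.isSymmSndFDerivAt (by norm_num)).eq u w
  -- F2
  -- derivative of y ↦ (g y).mulVec v
  have hmv : ∀ v : Fin q → ℝ, HasFDerivAt (fun y => (g y).mulVec v)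
      (ContinuousLinearMap.pi fun k => ∑ j, v j • fderiv ℝ (fun y => g y k j) x) x := by
    intro v
    apply hasFDerivAt_pi''
    intro k
    rw [ContinuousLinearMap.proj_pi]
    have h1 : (fun y => (g y).mulVec v k) = fun y => ∑ j, v j * g y k j := by
      funext y; simp [Matrix.mulVec, dotProduct, mul_comm]
    rw [h1]
    exact HasFDerivAt.fun_sum fun j _ => ((hgd k j).hasFDerivAt.const_mul (v j))
  have hmv_val : ∀ (v : Fin q → ℝ) (u : EuclideanSpace ℝ (Fin d)),
      (ContinuousLinearMap.pi fun k => ∑ j, v j • fderiv ℝ (fun y => g y k j) x) u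
        = (g1 u).mulVec v := by
    intro v u
    funext k
    simp [hg1def, Matrix.mulVec, dotProduct, mul_comm, ContinuousLinearMap.pi_apply]
  have hF2 : ∀ (u : EuclideanSpace ℝ (Fin d)) (v : Fin q → ℝ),
      B2 u ((WithLp.equiv 2 (Fin d → ℝ)).symm ((g x).mulVec v))
        = - DL ((g1 u).mulVec v) := by
    intro u v
    set e : (Fin d → ℝ) →L[ℝ] EuclideanSpace ℝ (Fin d) :=
      ((EuclideanSpace.equiv (Fin d) ℝ).symm :
        (Fin d → ℝ) ≃L[ℝ] EuclideanSpace ℝ (Fin d)).toContinuousLinearMap with hedef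
    have hEv : (fun y => fderiv ℝ φ y
          ((WithLp.equiv 2 (Fin d → ℝ)).symm ((g y).mulVec v)))
        =ᶠ[nhds x] (fun _ => (0 : EuclideanSpace ℝ (Fin p))) := by
      filter_upwards [hU.mem_nhds hx] with y hy
      have h := htan y hy ((WithLp.equiv 2 (Fin q → ℝ)).symm v)
      rw [Matrix.toEuclideanLin_apply, WithLp.equiv_symm_apply, WithLp.ofLp_toLp] at h
      exact h
    have h0 : fderiv ℝ (fun y => fderiv ℝ φ y
        ((WithLp.equiv 2 (Fin d → ℝ)).symm ((g y).mulVec v))) x = 0 := by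
      rw [hEv.fderiv_eq]
      exact fderiv_const_apply _
    have hb : HasFDerivAt (fun y =>
        (WithLp.equiv 2 (Fin d → ℝ)).symm ((g y).mulVec v))
        (e.comp (ContinuousLinearMap.pi fun k => ∑ j, v j • fderiv ℝ (fun y => g y k j) x))
        x := e.hasFDerivAt.comp x (hmv v)
    have hc : HasFDerivAt (fderiv ℝ φ) B2 x := by
      rw [hB2def]; exact hφ1d.hasFDerivAt
    have hprod := hc.clm_apply hb
    have hfd := hprod.fderiv
    rw [h0] at hfd
    have happ := congrArg (fun (L : EuclideanSpace ℝ (Fin d) →L[ℝ] EuclideanSpace ℝ (Fin p)) => L u) hfd.symm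
    simp only [ContinuousLinearMap.zero_apply, ContinuousLinearMap.add_apply,
      ContinuousLinearMap.comp_apply, ContinuousLinearMap.flip_apply] at happ
    have harg : e ((ContinuousLinearMap.pi fun k => ∑ j, v j • fderiv ℝ (fun y => g y k j) x) u)
        = (WithLp.equiv 2 (Fin d → ℝ)).symm ((g1 u).mulVec v) := by
      rw [hmv_val]
      rfl
    rw [harg] at happ
    have : D ((WithLp.equiv 2 (Fin d → ℝ)).symm ((g1 u).mulVec v))
        + B2 u ((WithLp.equiv 2 (Fin d → ℝ)).symm ((g x).mulVec v)) = 0 := happ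
    rw [hDL] at this
    linear_combination (norm := module) this
  -- linearity of g1
  have hg1sub : ∀ u u', g1 (u - u') = g1 u - g1 u' := by
    intro u u'
    ext i j
    simp only [hg1def, Matrix.of_apply, Matrix.sub_apply]
    exact map_sub _ u u'
  -- F4 : the Pr-derivative term
  have hPk : ∀ (u : EuclideanSpace ℝ (Fin d)) (k : Fin d) (l : Fin d),
      fderiv ℝ (fun y => Pr y k l) x u
        = -(∑ j, (fderiv ℝ (fun y => g y k j) x u * AA j l
            + g x k j * fderiv ℝ (fun y => (((g y)ᵀ * g y)⁻¹ * (g y)ᵀ) j l) x u)) := by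
    intro u k l
    have heq : (fun y => Pr y k l) = fun y =>
        (1 : Matrix (Fin d) (Fin d) ℝ) k l
          - ∑ j, g y k j * (((g y)ᵀ * g y)⁻¹ * (g y)ᵀ) j l := by
      funext y
      rw [hPr y, Matrix.sub_apply, Matrix.mul_assoc, Matrix.mul_apply]
    have hder : HasFDerivAt (fun y =>
        (1 : Matrix (Fin d) (Fin d) ℝ) k l
          - ∑ j, g y k j * (((g y)ᵀ * g y)⁻¹ * (g y)ᵀ) j l)
        (0 - ∑ j, (g x k j • fderiv ℝ (fun y => (((g y)ᵀ * g y)⁻¹ * (g y)ᵀ) j l) x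
          + (((g x)ᵀ * g x)⁻¹ * (g x)ᵀ) j l • fderiv ℝ (fun y => g y k j) x)) x := by
      exact (hasFDerivAt_const _ _).sub (HasFDerivAt.fun_sum fun j _ =>
        ((hgd k j).hasFDerivAt.mul (hBinvd j l).hasFDerivAt))
    rw [heq, hder.fderiv]
    simp only [ContinuousLinearMap.coe_sub', Pi.sub_apply, ContinuousLinearMap.zero_apply,
      ContinuousLinearMap.coe_sum', Finset.sum_apply, ContinuousLinearMap.add_apply,
      ContinuousLinearMap.coe_smul', Pi.smul_apply, smul_eq_mul, hAA]
    rw [zero_sub]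
    congr 1
    refine Finset.sum_congr rfl fun j _ => ?_
    ring
  have hPrD : ∀ (u : EuclideanSpace ℝ (Fin d)) (i : Fin d),
      DL ((Matrix.of fun k l => fderiv ℝ (fun y => Pr y k l) x u).mulVec (Pi.single i 1))
        = - DL ((g1 u).mulVec (av i)) := by
    intro u i
    have hvec : ((Matrix.of fun k l => fderiv ℝ (fun y => Pr y k l) x u).mulVec (Pi.single i 1))
        = -((g1 u).mulVec (av i))
          - (g x).mulVec (fun j => fderiv ℝ (fun y => (((g y)ᵀ * g y)⁻¹ * (g y)ᵀ) j i) x u) := by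
      funext k
      rw [Matrix.mulVec_single_one]
      simp only [Matrix.col_apply, Matrix.of_apply, mul_one]
      rw [hPk u k i]
      simp only [Pi.sub_apply, Pi.neg_apply]
      have hAAi : av i = fun j => AA j i := by
        simp only [hav]
        rw [Matrix.mulVec_single_one]
        rfl
      have h1 : ((g1 u).mulVec (av i)) k = ∑ j, fderiv ℝ (fun y => g y k j) x u * AA j i := by
        rw [hAAi]
        simp only [hg1def, Matrix.mulVec, dotProduct, Matrix.of_apply]
      have h2 : ((g x).mulVec
          (fun j => fderiv ℝ (fun y => (((g y)ᵀ * g y)⁻¹ * (g y)ᵀ) j i) x u)) k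
          = ∑ j, g x k j * fderiv ℝ (fun y => (((g y)ᵀ * g y)⁻¹ * (g y)ᵀ) j i) x u := by
        simp [Matrix.mulVec, dotProduct]
      rw [h1, h2, sub_eq_add_neg, ← neg_add, ← Finset.sum_add_distrib]
    rw [hvec, map_sub, map_neg, hker, sub_zero]
  -- gradient of log det
  have hinveq : ((g x)ᵀ * g x)⁻¹ = (((g x)ᵀ * g x).det)⁻¹ • ((g x)ᵀ * g x).adjugate := by
    rw [Matrix.inv_def, Ring.inverse_eq_inv]
  have hinvsym : ∀ a b, ((g x)ᵀ * g x)⁻¹ a b = ((g x)ᵀ * g x)⁻¹ b a := by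
    intro a b
    have h1 : (((g x)ᵀ * g x)⁻¹)ᵀ = ((g x)ᵀ * g x)⁻¹ := by
      rw [Matrix.transpose_nonsing_inv]
      congr 1
      rw [Matrix.transpose_mul, Matrix.transpose_transpose]
    conv_lhs => rw [← h1]
    rw [Matrix.transpose_apply]
  have hgrad : gradient (fun y => Real.log ((g y)ᵀ * g y).det) x
      = (WithLp.equiv 2 (Fin d → ℝ)).symm
          (fun k => 2 * ∑ i, ((g1 (EuclideanSpace.single i 1)).mulVec (av i)) k) := by
    obtain ⟨L, hL, hLval⟩ := det_hasFDerivAt (N := fun y => (g y)ᵀ * g y)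
      (N' := fun a b => ∑ i, (g x i a • fderiv ℝ (fun y => g y i b) x
        + g x i b • fderiv ℝ (fun y => g y i a) x)) hGder
    have hlog : HasFDerivAt (fun y => Real.log (((g y)ᵀ * g y).det))
        ((((g x)ᵀ * g x).det)⁻¹ • L) x :=
      by have := (Real.hasDerivAt_log hdet_ne).comp_hasFDerivAt x hL; exact this
    have hfder : fderiv ℝ (fun y => Real.log (((g y)ᵀ * g y).det)) x
        = (((g x)ᵀ * g x).det)⁻¹ • L := hlog.fderiv
    ext k
    have h1 : (gradient (fun y => Real.log (((g y)ᵀ * g y).det)) x) k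
        = inner (𝕜 := ℝ) (gradient (fun y => Real.log (((g y)ᵀ * g y).det)) x)
            (EuclideanSpace.single k (1:ℝ)) := by
      rw [EuclideanSpace.inner_single_right]
      simp
    rw [h1, gradient, InnerProductSpace.toDual_symm_apply, hfder,
      WithLp.equiv_symm_apply, PiLp.toLp_apply, ContinuousLinearMap.smul_apply, smul_eq_mul,
      hLval]
    -- identify the matrix entries
    set fd : Fin d → Fin q → ℝ :=
      fun i c => fderiv ℝ (fun y => g y i c) x (EuclideanSpace.single k 1) with hfd
    have hMd : (Matrix.of fun a b => (∑ i, (g x i a • fderiv ℝ (fun y => g y i b) x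
        + g x i b • fderiv ℝ (fun y => g y i a) x)) (EuclideanSpace.single k 1))
        = Matrix.of fun a b => ∑ i, (g x i a * fd i b + g x i b * fd i a) := by
      ext a b
      simp [hfd, ContinuousLinearMap.sum_apply, ContinuousLinearMap.add_apply,
        ContinuousLinearMap.smul_apply, smul_eq_mul]
    rw [hMd]
    have htr : (((g x)ᵀ * g x).det)⁻¹ * (((g x)ᵀ * g x).adjugate
          * Matrix.of fun a b => ∑ i, (g x i a * fd i b + g x i b * fd i a)).trace
        = (((g x)ᵀ * g x)⁻¹
          * Matrix.of fun a b => ∑ i, (g x i a * fd i b + g x i b * fd i a)).trace := by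
      rw [hinveq, Matrix.smul_mul, Matrix.trace_smul, smul_eq_mul]
    rw [htr]
    have hexp : (((g x)ᵀ * g x)⁻¹
          * Matrix.of fun a b => ∑ i, (g x i a * fd i b + g x i b * fd i a)).trace
        = ∑ c, ∑ b, ((g x)ᵀ * g x)⁻¹ c b * (∑ i, (g x i b * fd i c + g x i c * fd i b)) := by
      simp [Matrix.trace, Matrix.diag, Matrix.mul_apply]
    rw [hexp, sumalg _ _ _ hinvsym]
    congr 1
    refine Finset.sum_congr rfl fun i _ => ?_
    have hmv : ((g1 (EuclideanSpace.single i 1)).mulVec (av i)) k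
        = ∑ c, fd i c * (∑ b, ((g x)ᵀ * g x)⁻¹ c b * g x i b) := by
      have hAAi : av i = fun c => AA c i := by
        simp only [hav]
        rw [Matrix.mulVec_single_one]
        rfl
      rw [hAAi]
      simp only [hg1def, Matrix.mulVec, dotProduct, Matrix.of_apply]
      refine Finset.sum_congr rfl fun c _ => ?_
      rw [hsymm k i c]
      rw [hAA, Matrix.mul_apply]
      simp only [hfd, Matrix.transpose_apply]
    rw [hmv]
  -- abbreviations for the recurring vectors
  -- assembly
  have hsum2 : ∀ i : Fin d,
      fderiv ℝ (fun y => fderiv ℝ φ y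
          ((WithLp.equiv 2 (Fin d → ℝ)).symm ((Pr x).mulVec (Pi.single i 1)))) x
        ((WithLp.equiv 2 (Fin d → ℝ)).symm ((Pr x).mulVec (Pi.single i 1)))
      = B2 (EuclideanSpace.single i 1) (EuclideanSpace.single i 1)
        + (2:ℝ) • DL ((g1 (EuclideanSpace.single i 1)).mulVec (av i))
        - DL ((g1 ((WithLp.equiv 2 (Fin d → ℝ)).symm ((g x).mulVec (av i)))).mulVec (av i)) := by
    intro i
    rw [hBapp, hηw i]
    simp only [map_sub, ContinuousLinearMap.sub_apply]
    rw [hB2symm ((WithLp.equiv 2 (Fin d → ℝ)).symm ((g x).mulVec (av i)))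
        (EuclideanSpace.single i 1),
      hF2 (EuclideanSpace.single i 1) (av i),
      hF2 ((WithLp.equiv 2 (Fin d → ℝ)).symm ((g x).mulVec (av i))) (av i)]
    module
  have hsum1 : ∀ i : Fin d,
      fderiv ℝ φ x ((WithLp.equiv 2 (Fin d → ℝ)).symm
          ((Matrix.of fun k l => fderiv ℝ (fun y => Pr y k l) x
              ((WithLp.equiv 2 (Fin d → ℝ)).symm
                ((Pr x).mulVec (Pi.single i 1)))).mulVec (Pi.single i 1)))
      = - DL ((g1 (EuclideanSpace.single i 1)).mulVec (av i))
        + DL ((g1 ((WithLp.equiv 2 (Fin d → ℝ)).symm ((g x).mulVec (av i)))).mulVec (av i)) := by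
    intro i
    rw [hDL, hPrD]
    rw [hηw i, hg1sub, Matrix.sub_mulVec, map_sub]
    module
  have hΔ : ∀ i : Fin d,
      fderiv ℝ (fun y => fderiv ℝ φ y (EuclideanSpace.single i 1)) x
          (EuclideanSpace.single i 1)
        = B2 (EuclideanSpace.single i 1) (EuclideanSpace.single i 1) :=
    fun i => hBapp _ _
  have hgradterm : (1 / 2 : ℝ) • fderiv ℝ φ x
      (gradient (fun y => Real.log ((g y)ᵀ * g y).det) x)
      = ∑ i, DL ((g1 (EuclideanSpace.single i 1)).mulVec (av i)) := by
    rw [hgrad, ← hD, hDL]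
    have : (fun k => 2 * ∑ i, ((g1 (EuclideanSpace.single i 1)).mulVec (av i)) k)
        = (2:ℝ) • ∑ i, (g1 (EuclideanSpace.single i 1)).mulVec (av i) := by
      funext k
      simp only [Pi.smul_apply, Finset.sum_apply, smul_eq_mul]
    rw [this, _root_.map_smul, map_sum, smul_smul]
    norm_num
  rw [Finset.sum_congr rfl (fun i _ => hsum1 i), Finset.sum_congr rfl (fun i _ => hsum2 i),
    Finset.sum_congr rfl (fun i _ => hΔ i), hgradterm]
  rw [← Finset.sum_add_distrib, ← Finset.sum_add_distrib]
  refine Finset.sum_congr rfl fun i _ => ?_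
  module
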